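/- Let Λ, Λ₀ be positive definite d×d matrices, β₀ ∈ ℝ^d, S a positive definite d×d matrix, t ∈ ℝ^d with t ≠ 0, and let ε, B_x, B_y > 0. Let Δ be a random symmetric d×d matrix whose upper-triangular (including diagonal) entries are i.i.d. Laplace(0, 2d(d+1)B_x²/ε), and let δ be an independent random vector with i.i.d. Laplace(0, 4dB_xB_y/ε) coordinates. Define μ_NP(n) = (Λ₀ + Λ·nS)⁻¹(Λ·nt + Λ₀β₀) and μ_DP(n) = (Λ₀ + Λ(nS + Δ))⁻¹(Λ(nt + δ) + Λ₀β₀). Then for every α > 0 there exist constants C and N such that for all n ≥ N: Pr{‖μ_DP(n) − μ_NP(n)‖₁ > C/n} < α; that is, the private posterior mean of the regression weights converges to the non-private one at rate O(1/n) with high probability. -/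

import Mathlib

open MeasureTheory ProbabilityTheory Matrix Filter Topology

/-- The Laplace distribution with location `0` and scale `b`,
with density `x ↦ (1/(2b)) · exp (−|x|/b)` with respect to Lebesgue measure. -/
noncomputable def laplaceMeasure (b : ℝ) : Measure ℝ :=
  volume.withDensity fun x => ENNReal.ofReal ((2 * b)⁻¹ * Real.exp (-|x| / b))

/-- The ℓ¹ norm on `ℝ^d`. -/
def l1 {d : ℕ} (v : Fin d → ℝ) : ℝ := ∑ i, |v i|

/-- Index set for the scalar noise variables: the `d(d+1)/2` upper-triangular (including
diagonal) entries of the noise matrix `Δ` and the `d` coordinates of the noise vector `δ`. -/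
def NoiseIdx (d : ℕ) : Type := {p : Fin d × Fin d // p.1 ≤ p.2} ⊕ Fin d

/-- Assemble a symmetric matrix from its upper-triangular (including diagonal) entries. -/
def symMatrixOf {d : ℕ} (u : {p : Fin d × Fin d // p.1 ≤ p.2} → ℝ) :
    Matrix (Fin d) (Fin d) ℝ :=
  fun i k => if h : i ≤ k then u ⟨(i, k), h⟩ else u ⟨(k, i), le_of_not_ge h⟩

instance noiseIdxFintype (d : ℕ) : Fintype (NoiseIdx d) := by
  unfold NoiseIdx; infer_instance

section Pert
variable {R : Type*} [NormedRing R] [NormOneClass R] [HasSummableGeomSeries R]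

lemma pert_isUnit_and_norm (u : Rˣ) (E : R) (h : ‖(↑u⁻¹ : R) * E‖ ≤ 1/2) :
    IsUnit ((u : R) + E) ∧ ‖Ring.inverse ((u : R) + E)‖ ≤ 2 * ‖(↑u⁻¹ : R)‖ := by
  set x : R := -((↑u⁻¹ : R) * E) with hxdef
  have hx : ‖x‖ < 1 := by
    rw [hxdef, norm_neg]; linarith
  have hkey : (u : R) + E = (u : R) * (1 - x) := by
    have : (u : R) * ((↑u⁻¹ : R) * E) = E := by
      rw [← mul_assoc, Units.mul_inv, one_mul]
    rw [hxdef, mul_sub, mul_one, mul_neg, sub_neg_eq_add, this]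
  set w : Rˣ := u * Units.oneSub x hx with hwdef
  have hw : (u : R) + E = (w : R) := by
    rw [hwdef, Units.val_mul, Units.val_oneSub, hkey]
  refine ⟨hw ▸ w.isUnit, ?_⟩
  rw [hw, Ring.inverse_unit, hwdef, _root_.mul_inv_rev, Units.val_mul]
  have h1 : (↑(Units.oneSub x hx)⁻¹ : R) = ∑' n : ℕ, x ^ n := rfl
  have h2 : ‖(↑(Units.oneSub x hx)⁻¹ : R)‖ ≤ 2 := by
    rw [h1]
    refine (tsum_geometric_le_of_norm_lt_one x hx).trans ?_
    rw [norm_one]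
    have hx' : ‖x‖ ≤ 1/2 := by rw [hxdef, norm_neg]; exact h
    have : (1 : ℝ) - ‖x‖ ≥ 1/2 := by linarith
    have h3 : (1 - ‖x‖)⁻¹ ≤ 2 := by
      rw [inv_le_comm₀ (by linarith) (by norm_num)]
      linarith
    linarith
  calc ‖(↑(Units.oneSub x hx)⁻¹ : R) * (↑u⁻¹ : R)‖
      ≤ ‖(↑(Units.oneSub x hx)⁻¹ : R)‖ * ‖(↑u⁻¹ : R)‖ := norm_mul_le _ _
    _ ≤ 2 * ‖(↑u⁻¹ : R)‖ := by
        apply mul_le_mul_of_nonneg_right h2 (norm_nonneg _)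
end Pert

lemma laplace_integrable {b : ℝ} (hb : 0 < b) :
    Integrable (fun x : ℝ => (2 * b)⁻¹ * Real.exp (-|x| / b)) := by
  apply Integrable.const_mul
  have hIoi : IntegrableOn (fun x : ℝ => Real.exp (-|x| / b)) (Set.Ioi 0) := by
    apply (exp_neg_integrableOn_Ioi 0 (show 0 < 1/b by positivity)).congr_fun _ measurableSet_Ioi
    intro x hx
    rw [Set.mem_Ioi] at hx
    show Real.exp (-(1/b) * x) = Real.exp (-|x| / b)
    rw [abs_of_pos hx]
    ring_nf
  have hIci : IntegrableOn (fun x : ℝ => Real.exp (-|x| / b)) (Set.Ici 0) := by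
    rwa [integrableOn_Ici_iff_integrableOn_Ioi]
  have hg : Integrable (Set.indicator (Set.Ici 0) fun x : ℝ => Real.exp (-|x| / b)) :=
    (integrable_indicator_iff measurableSet_Ici).mpr hIci
  have hneg : Integrable (fun x : ℝ =>
      Set.indicator (Set.Ici 0) (fun y : ℝ => Real.exp (-|y| / b)) (-1 * x)) :=
    (MeasureTheory.integrable_comp_mul_left_iff _ (by norm_num : (-1 : ℝ) ≠ 0)).mpr hg
  have hIic : IntegrableOn (fun x : ℝ => Real.exp (-|x| / b)) (Set.Iic 0) := by
    refine (integrable_indicator_iff measurableSet_Iic).mp ?_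
    apply hneg.congr
    apply Filter.Eventually.of_forall
    intro x
    show (Set.Ici (0:ℝ)).indicator (fun y => Real.exp (-|y| / b)) (-1 * x)
      = (Set.Iic (0:ℝ)).indicator (fun x => Real.exp (-|x| / b)) x
    by_cases hx : x ≤ 0
    · rw [Set.indicator_of_mem (by simpa using hx : (-1 : ℝ) * x ∈ Set.Ici 0),
        Set.indicator_of_mem (by simpa using hx : x ∈ Set.Iic 0)]
      simp [abs_neg]
    · rw [Set.indicator_of_notMem (by simp; linarith : (-1 : ℝ) * x ∉ Set.Ici 0),
        Set.indicator_of_notMem (by simpa using hx)]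
  have : IntegrableOn (fun x : ℝ => Real.exp (-|x| / b)) (Set.Iic 0 ∪ Set.Ioi 0) :=
    hIic.union hIoi
  rw [Set.Iic_union_Ioi] at this
  exact integrableOn_univ.mp this

lemma laplace_finite {b : ℝ} (hb : 0 < b) : IsFiniteMeasure (laplaceMeasure b) := by
  constructor
  rw [laplaceMeasure, withDensity_apply _ MeasurableSet.univ, Measure.restrict_univ]
  exact (laplace_integrable hb).lintegral_lt_top

lemma laplace_tail_tendsto {b : ℝ} (hb : 0 < b) :
    Tendsto (fun k : ℕ => laplaceMeasure b {x : ℝ | (k : ℝ) < |x|}) atTop (𝓝 0) := by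
  haveI := laplace_finite hb
  have hmeas : ∀ k : ℕ, NullMeasurableSet {x : ℝ | (k : ℝ) < |x|} (laplaceMeasure b) :=
    fun k => ((isOpen_lt continuous_const continuous_abs).measurableSet).nullMeasurableSet
  have hanti : Antitone fun k : ℕ => {x : ℝ | (k : ℝ) < |x|} := by
    intro k l hkl x hx
    simp only [Set.mem_setOf_eq] at *
    have : (k : ℝ) ≤ l := by exact_mod_cast hkl
    linarith
  have h0 : (⋂ k : ℕ, {x : ℝ | (k : ℝ) < |x|}) = ∅ := by
    ext x
    simp only [Set.mem_iInter, Set.mem_setOf_eq, Set.mem_empty_iff_false, iff_false, not_forall,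
      not_lt]
    obtain ⟨k, hk⟩ := exists_nat_gt |x|
    exact ⟨k, le_of_lt hk⟩
  have := tendsto_measure_iInter_atTop (μ := laplaceMeasure b) hmeas hanti
    ⟨0, measure_ne_top _ _⟩
  rw [h0] at this
  simpa [Function.comp_def] using this

section MatInst
variable {d : ℕ}
attribute [local instance] Matrix.linftyOpNormedRing Matrix.linftyOpNormedAlgebra

instance matrixComplete : CompleteSpace (Matrix (Fin d) (Fin d) ℝ) :=
  (by infer_instance : CompleteSpace (Fin d → Fin d → ℝ))

lemma l1_le_card_norm (v : Fin d → ℝ) : l1 v ≤ d * ‖v‖ := by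
  rw [l1]
  calc ∑ i, |v i| ≤ ∑ _i : Fin d, ‖v‖ := by
        apply Finset.sum_le_sum
        intro i _
        rw [← Real.norm_eq_abs]
        exact norm_le_pi_norm v i
    _ = d * ‖v‖ := by
        rw [Finset.sum_const, Finset.card_univ, Fintype.card_fin, nsmul_eq_mul]

lemma entry_norm_bound (A : Matrix (Fin d) (Fin d) ℝ) {M : ℝ} (hM : 0 ≤ M)
    (h : ∀ i j, |A i j| ≤ M) : ‖A‖ ≤ d * M := by
  have key : (Finset.univ.sup fun i : Fin d => ∑ j, ‖A i j‖₊) ≤ (NNReal.mk (d * M) (by positivity)) := by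
    apply Finset.sup_le
    intro i _
    calc ∑ j, ‖A i j‖₊ ≤ ∑ _j : Fin d, (NNReal.mk M hM) := by
          apply Finset.sum_le_sum
          intro j _
          rw [← NNReal.coe_le_coe]
          simpa [Real.norm_eq_abs] using h i j
      _ = (NNReal.mk (d * M) (by positivity)) := by
          rw [Finset.sum_const, Finset.card_univ, Fintype.card_fin, ← NNReal.coe_inj]
          rw [NNReal.coe_nsmul, NNReal.coe_mk, NNReal.coe_mk]
          ring
  calc ‖A‖ = ((Finset.univ.sup fun i : Fin d => ∑ j, ‖A i j‖₊ : NNReal) : ℝ) :=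
        Matrix.linfty_opNorm_def A
    _ ≤ ((NNReal.mk (d * M) (by positivity)) : ℝ) := NNReal.coe_le_coe.mpr key
    _ = d * M := rfl

lemma key_bound (hd : 0 < d) (U : Matrix (Fin d) (Fin d) ℝ) (hU : IsUnit U)
    (v : Fin d → ℝ) (M : ℝ) (hM : 0 ≤ M) :
    ∃ (C : ℝ) (N : ℕ), 0 ≤ C ∧ 1 ≤ N ∧ ∀ n : ℕ, N ≤ n →
      ∀ (Q : Matrix (Fin d) (Fin d) ℝ) (f : Fin d → ℝ), ‖Q‖ ≤ M → ‖f‖ ≤ M →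
      ‖((n : ℝ) • U + Q)⁻¹ *ᵥ ((n : ℝ) • v + f) - U⁻¹ *ᵥ v‖ ≤ C / n := by
  have : Nonempty (Fin d) := ⟨⟨0, hd⟩⟩
  set u : (Matrix (Fin d) (Fin d) ℝ)ˣ := hU.unit with hu
  have huval : (u : Matrix (Fin d) (Fin d) ℝ) = U := hU.unit_spec
  have hUinv : U⁻¹ = (↑u⁻¹ : Matrix (Fin d) (Fin d) ℝ) := by
    rw [Matrix.nonsing_inv_eq_ringInverse, ← huval, Ring.inverse_unit]
  set r : ℝ := ‖U⁻¹‖ with hr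
  have hr0 : 0 ≤ r := norm_nonneg _
  refine ⟨2 * r ^ 2 * M * ‖v‖ + 2 * r * M, ⌈2 * r * M⌉₊ + 1, by positivity, le_add_self, ?_⟩
  intro n hn Q f hQ hf
  have hn1 : 1 ≤ n := le_trans le_add_self hn
  have hnR : (1 : ℝ) ≤ (n : ℝ) := by exact_mod_cast hn1
  have hn0 : (0 : ℝ) < (n : ℝ) := by linarith
  have hnrM : 2 * r * M ≤ (n : ℝ) := by
    calc 2 * r * M ≤ (⌈2 * r * M⌉₊ : ℝ) := Nat.le_ceil _
      _ ≤ (n : ℝ) := by exact_mod_cast le_trans (Nat.le_succ _) hn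
  set E : Matrix (Fin d) (Fin d) ℝ := (n : ℝ)⁻¹ • Q with hE
  have hEnorm : ‖E‖ ≤ M / n := by
    rw [hE, norm_smul, norm_inv, Real.norm_natCast]
    rw [div_eq_inv_mul]
    exact mul_le_mul_of_nonneg_left hQ (by positivity)
  have hsmall : ‖(↑u⁻¹ : Matrix (Fin d) (Fin d) ℝ) * E‖ ≤ 1 / 2 := by
    calc ‖(↑u⁻¹ : Matrix (Fin d) (Fin d) ℝ) * E‖ ≤ r * (M / n) := by
          rw [hr, hUinv]
          exact le_trans (norm_mul_le _ _) (mul_le_mul_of_nonneg_left hEnorm (norm_nonneg _))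
      _ ≤ 1 / 2 := by
          rw [← mul_div_assoc, div_le_div_iff₀ hn0 (by norm_num : (0:ℝ) < 2)]
          nlinarith
  obtain ⟨hunit, hnorm⟩ := pert_isUnit_and_norm u E hsmall
  rw [huval] at hunit hnorm
  have hVinv : (U + E)⁻¹ = Ring.inverse (U + E) := Matrix.nonsing_inv_eq_ringInverse _
  have hVnorm : ‖(U + E)⁻¹‖ ≤ 2 * r := by rw [hVinv, hr, hUinv]; exact hnorm
  have hA : (n : ℝ) • U + Q = (n : ℝ) • (U + E) := by
    rw [smul_add, hE, smul_smul, mul_inv_cancel₀ (ne_of_gt hn0), one_smul]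
  have hdetE : IsUnit (U + E).det := (Matrix.isUnit_iff_isUnit_det _).mp hunit
  have hAinv : ((n : ℝ) • U + Q)⁻¹ = (n : ℝ)⁻¹ • (U + E)⁻¹ := by
    rw [hA]
    apply Matrix.inv_eq_right_inv
    rw [Matrix.smul_mul, Matrix.mul_smul, smul_smul, mul_inv_cancel₀ (ne_of_gt hn0),
      Matrix.mul_nonsing_inv _ hdetE, one_smul]
  rw [hAinv]
  have expand : ((n : ℝ)⁻¹ • (U + E)⁻¹) *ᵥ ((n : ℝ) • v + f)
      = (U + E)⁻¹ *ᵥ v + (n : ℝ)⁻¹ • ((U + E)⁻¹ *ᵥ f) := by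
    rw [Matrix.mulVec_add, Matrix.smul_mulVec, Matrix.mulVec_smul, smul_smul,
      inv_mul_cancel₀ (ne_of_gt hn0), one_smul, Matrix.smul_mulVec]
  rw [expand]
  have hsub : (U + E)⁻¹ *ᵥ v + (n : ℝ)⁻¹ • ((U + E)⁻¹ *ᵥ f) - U⁻¹ *ᵥ v
      = ((U + E)⁻¹ - U⁻¹) *ᵥ v + (n : ℝ)⁻¹ • ((U + E)⁻¹ *ᵥ f) := by
    rw [Matrix.sub_mulVec]; abel
  rw [hsub]
  have hdiff : (U + E)⁻¹ - U⁻¹ = (U + E)⁻¹ * (U - (U + E)) * U⁻¹ :=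
    Matrix.inv_sub_inv (by simp [hunit, hU])
  have hUsub : U - (U + E) = -E := by abel
  have hbound1 : ‖((U + E)⁻¹ - U⁻¹) *ᵥ v‖ ≤ 2 * r * (M / n) * r * ‖v‖ := by
    rw [hdiff, hUsub]
    calc ‖((U + E)⁻¹ * -E * U⁻¹) *ᵥ v‖ ≤ ‖(U + E)⁻¹ * -E * U⁻¹‖ * ‖v‖ :=
          Matrix.linfty_opNorm_mulVec _ _
      _ ≤ 2 * r * (M / n) * r * ‖v‖ := by
          apply mul_le_mul_of_nonneg_right _ (norm_nonneg v)
          calc ‖(U + E)⁻¹ * -E * U⁻¹‖ ≤ ‖(U + E)⁻¹ * -E‖ * ‖U⁻¹‖ := Matrix.linfty_opNorm_mul _ _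
            _ ≤ ‖(U + E)⁻¹‖ * ‖-E‖ * ‖U⁻¹‖ := by
                apply mul_le_mul_of_nonneg_right (Matrix.linfty_opNorm_mul _ _) (norm_nonneg _)
            _ ≤ 2 * r * (M / n) * r := by
                rw [norm_neg, ← hr]
                have h1 : ‖(U + E)⁻¹‖ * ‖E‖ ≤ (2 * r) * (M / n) := by
                  apply mul_le_mul hVnorm hEnorm (norm_nonneg _) (by positivity)
                exact mul_le_mul_of_nonneg_right h1 hr0
  have hbound2 : ‖(n : ℝ)⁻¹ • ((U + E)⁻¹ *ᵥ f)‖ ≤ (n : ℝ)⁻¹ * (2 * r * M) := by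
    rw [norm_smul, norm_inv, Real.norm_natCast]
    apply mul_le_mul_of_nonneg_left _ (by positivity)
    calc ‖(U + E)⁻¹ *ᵥ f‖ ≤ ‖(U + E)⁻¹‖ * ‖f‖ := Matrix.linfty_opNorm_mulVec _ _
      _ ≤ 2 * r * M := mul_le_mul hVnorm hf (norm_nonneg _) (by positivity)
  calc ‖((U + E)⁻¹ - U⁻¹) *ᵥ v + (n : ℝ)⁻¹ • ((U + E)⁻¹ *ᵥ f)‖
      ≤ ‖((U + E)⁻¹ - U⁻¹) *ᵥ v‖ + ‖(n : ℝ)⁻¹ • ((U + E)⁻¹ *ᵥ f)‖ := norm_add_le _ _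
    _ ≤ 2 * r * (M / n) * r * ‖v‖ + (n : ℝ)⁻¹ * (2 * r * M) := add_le_add hbound1 hbound2
    _ = (2 * r ^ 2 * M * ‖v‖ + 2 * r * M) / n := by
        field_simp
        try exact Or.inl trivial


set_option maxHeartbeats 1600000 in
/-- **Asymptotic efficiency of ε-differentially private Bayesian linear regression.**
With the random symmetric Laplace noise matrix `Δ` (i.i.d. `Laplace(0, 2d(d+1)Bx²/ε)`
upper-triangular entries) perturbing `n·x̄x̄ = nS` and the independent Laplace noise vector
`δ` (i.i.d. `Laplace(0, 4dBxBy/ε)` coordinates) perturbing `n·x̄y = nt`, the private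
posterior mean `μ_DP(n) = (Λ₀ + Λ(nS + Δ))⁻¹(Λ(nt + δ) + Λ₀β₀)` converges to the
non-private one `μ_NP(n) = (Λ₀ + Λ·nS)⁻¹(Λ·nt + Λ₀β₀)` at rate `O(1/n)`: for every
`α > 0` there exist `C`, `N` with `Pr{‖μ_DP(n) − μ_NP(n)‖₁ > C/n} < α` for all `n ≥ N`. -/
theorem stmt_15 {d : ℕ} (hd : 0 < d) (Λ Λ₀ : Matrix (Fin d) (Fin d) ℝ)
    (hΛ : Λ.PosDef) (hΛ₀ : Λ₀.PosDef) (β₀ : Fin d → ℝ)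
    (S : Matrix (Fin d) (Fin d) ℝ) (hS : S.PosDef) (t : Fin d → ℝ) (ht : t ≠ 0)
    (ε Bx By : ℝ) (hε : 0 < ε) (hBx : 0 < Bx) (hBy : 0 < By)
    {Ω : Type*} [MeasurableSpace Ω] (P : Measure Ω) [IsProbabilityMeasure P]
    (noise : NoiseIdx d → Ω → ℝ) (hmeas : ∀ idx, Measurable (noise idx))
    (hlawΔ : ∀ p, Measure.map (noise (Sum.inl p)) P
      = laplaceMeasure (2 * d * (d + 1) * Bx ^ 2 / ε))
    (hlawδ : ∀ i, Measure.map (noise (Sum.inr i)) P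
      = laplaceMeasure (4 * d * Bx * By / ε))
    (hindep : iIndepFun
      noise P) :
    ∀ α : ℝ, 0 < α → ∃ (C : ℝ) (N : ℕ), ∀ n ≥ N,
      P {ω | C / n <
          l1 ((Λ₀ + Λ * ((n : ℝ) • S + symMatrixOf fun p => noise (Sum.inl p) ω))⁻¹
                *ᵥ (Λ *ᵥ ((n : ℝ) • t + fun i => noise (Sum.inr i) ω) + Λ₀ *ᵥ β₀)
              - (Λ₀ + Λ * ((n : ℝ) • S))⁻¹ *ᵥ (Λ *ᵥ ((n : ℝ) • t) + Λ₀ *ᵥ β₀))}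
        < ENNReal.ofReal α := by
  
  intro α hα
  have hd' : (0 : ℝ) < d := by exact_mod_cast hd
  have hb1 : (0 : ℝ) < 2 * d * (d + 1) * Bx ^ 2 / ε := by positivity
  have hb2 : (0 : ℝ) < 4 * d * Bx * By / ε := by positivity
  -- choose the noise truncation level
  set m : ℕ := Fintype.card (NoiseIdx d) with hm
  set δr : ℝ := α / (2 * (m + 1)) with hδr
  have hδr0 : 0 < δr := by positivity
  have hδe : (0 : ENNReal) < ENNReal.ofReal δr := ENNReal.ofReal_pos.mpr hδr0
  obtain ⟨k₁, hk₁⟩ := (Filter.eventually_atTop).mp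
    (((laplace_tail_tendsto hb1).eventually_lt_const hδe))
  obtain ⟨k₂, hk₂⟩ := (Filter.eventually_atTop).mp
    (((laplace_tail_tendsto hb2).eventually_lt_const hδe))
  set k : ℕ := max k₁ k₂ with hk
  set M : ℝ := (k : ℝ) with hMdef
  have hM0 : 0 ≤ M := Nat.cast_nonneg _
  -- the bad event
  set bad : Set Ω := ⋃ i : NoiseIdx d, {ω | (k : ℝ) < |noise i ω|} with hbad
  have htailset : MeasurableSet {x : ℝ | (k : ℝ) < |x|} :=
    (isOpen_lt continuous_const continuous_abs).measurableSet
  have hPbadi : ∀ i : NoiseIdx d, P {ω | (k : ℝ) < |noise i ω|} < ENNReal.ofReal δr := by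
    intro i
    have : {ω | (k : ℝ) < |noise i ω|} = noise i ⁻¹' {x : ℝ | (k : ℝ) < |x|} := rfl
    rw [this, ← Measure.map_apply (hmeas i) htailset]
    cases i with
    | inl p => rw [hlawΔ p]; exact hk₁ k (le_max_left _ _)
    | inr j => rw [hlawδ j]; exact hk₂ k (le_max_right _ _)
  have hPbad : P bad < ENNReal.ofReal α := by
    calc P bad ≤ ∑ i : NoiseIdx d, P {ω | (k : ℝ) < |noise i ω|} :=
          measure_iUnion_fintype_le _ _
      _ ≤ ∑ _i : NoiseIdx d, ENNReal.ofReal δr :=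
          Finset.sum_le_sum fun i _ => le_of_lt (hPbadi i)
      _ = m • ENNReal.ofReal δr := by rw [Finset.sum_const, Finset.card_univ, hm]
      _ = ENNReal.ofReal (m * δr) := by
          rw [nsmul_eq_mul, ← ENNReal.ofReal_natCast m, ← ENNReal.ofReal_mul (by positivity)]
      _ < ENNReal.ofReal α := by
          apply ENNReal.ofReal_lt_ofReal_iff hα |>.mpr
          rw [hδr]
          rw [div_eq_mul_inv, ← mul_assoc]
          have h2m : (0 : ℝ) < 2 * (m + 1) := by positivity
          rw [mul_comm (m : ℝ) α, mul_assoc, ← div_eq_mul_inv]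
          have : (m : ℝ) / (2 * (m + 1)) < 1 := by
            rw [div_lt_one h2m]
            push_cast
            linarith
          nlinarith [this]
  -- the deterministic machinery
  set U : Matrix (Fin d) (Fin d) ℝ := Λ * S with hU
  have hUunit : IsUnit U := by
    rw [Matrix.isUnit_iff_isUnit_det, hU, Matrix.det_mul]
    exact (mul_pos hΛ.det_pos hS.det_pos).ne'.isUnit
  set v : Fin d → ℝ := Λ *ᵥ t with hv
  set M' : ℝ := ‖Λ₀‖ + ‖Λ‖ * (d * M) + ‖(Λ₀ *ᵥ β₀ : Fin d → ℝ)‖ + ‖Λ‖ * M with hM'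
  have hM'0 : 0 ≤ M' := by positivity
  obtain ⟨C₀, N₀, hC₀, hN₀, hKB⟩ := key_bound hd U hUunit v M' hM'0
  refine ⟨2 * d * (2 * C₀), N₀, ?_⟩
  intro n hn
  have hn1 : 1 ≤ n := le_trans hN₀ hn
  have hn0 : (0 : ℝ) < n := by exact_mod_cast hn1
  -- the target event is contained in the bad event
  have hsubset : {ω | 2 * d * (2 * C₀) / n <
          l1 ((Λ₀ + Λ * ((n : ℝ) • S + symMatrixOf fun p => noise (Sum.inl p) ω))⁻¹
                *ᵥ (Λ *ᵥ ((n : ℝ) • t + fun i => noise (Sum.inr i) ω) + Λ₀ *ᵥ β₀)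
              - (Λ₀ + Λ * ((n : ℝ) • S))⁻¹ *ᵥ (Λ *ᵥ ((n : ℝ) • t) + Λ₀ *ᵥ β₀))} ⊆ bad := by
    intro ω hω
    by_contra hnb
    rw [hbad, Set.mem_iUnion] at hnb
    push_neg at hnb
    have hbnd : ∀ i : NoiseIdx d, |noise i ω| ≤ M := by
      intro i
      have := hnb i
      simp only [Set.mem_setOf_eq, not_lt] at this
      exact this
    set Δω : Matrix (Fin d) (Fin d) ℝ := symMatrixOf fun p => noise (Sum.inl p) ω with hΔω
    set δω : Fin d → ℝ := fun i => noise (Sum.inr i) ω with hδω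
    have hΔnorm : ‖Δω‖ ≤ d * M := by
      apply entry_norm_bound _ hM0
      intro i j
      rw [hΔω, symMatrixOf]
      by_cases h : i ≤ j
      · rw [dif_pos h]; exact hbnd _
      · rw [dif_neg h]; exact hbnd _
    have hδnorm : ‖δω‖ ≤ M := by
      rw [pi_norm_le_iff_of_nonneg hM0]
      intro i
      rw [Real.norm_eq_abs]
      exact hbnd (Sum.inr i)
    -- rewrite into key_bound shape
    set Q' : Matrix (Fin d) (Fin d) ℝ := Λ₀ + Λ * Δω with hQ'
    set f' : Fin d → ℝ := Λ *ᵥ δω + Λ₀ *ᵥ β₀ with hf'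
    have hQ'norm : ‖Q'‖ ≤ M' := by
      rw [hQ', hM']
      have h1 : ‖Λ₀ + Λ * Δω‖ ≤ ‖Λ₀‖ + ‖Λ‖ * (d * M) := by
        refine (norm_add_le _ _).trans (add_le_add_right ?_ _)
        exact (Matrix.linfty_opNorm_mul _ _).trans
          (mul_le_mul_of_nonneg_left hΔnorm (norm_nonneg _))
      have h2 : (0:ℝ) ≤ ‖(Λ₀ *ᵥ β₀ : Fin d → ℝ)‖ + ‖Λ‖ * M := by positivity
      linarith
    have hf'norm : ‖f'‖ ≤ M' := by
      rw [hf', hM']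
      have h1 : ‖Λ *ᵥ δω + Λ₀ *ᵥ β₀‖ ≤ ‖Λ‖ * M + ‖(Λ₀ *ᵥ β₀ : Fin d → ℝ)‖ := by
        refine (norm_add_le _ _).trans (add_le_add_left ?_ _)
        exact (Matrix.linfty_opNorm_mulVec _ _).trans
          (mul_le_mul_of_nonneg_left hδnorm (norm_nonneg _))
      have h2 : (0:ℝ) ≤ ‖Λ₀‖ + ‖Λ‖ * (d * M) := by positivity
      linarith
    have hQnorm : ‖Λ₀‖ ≤ M' := by
      rw [hM']
      have : (0:ℝ) ≤ ‖Λ‖ * (d * M) + ‖(Λ₀ *ᵥ β₀ : Fin d → ℝ)‖ + ‖Λ‖ * M := by positivity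
      linarith
    have hfnorm : ‖(Λ₀ *ᵥ β₀ : Fin d → ℝ)‖ ≤ M' := by
      rw [hM']
      have h1 : (0:ℝ) ≤ ‖Λ₀‖ + ‖Λ‖ * (d * M) := by positivity
      have h2 : (0:ℝ) ≤ ‖Λ‖ * M := by positivity
      linarith
    have hmat1 : Λ₀ + Λ * ((n : ℝ) • S + Δω) = (n : ℝ) • U + Q' := by
      rw [mul_add, Matrix.mul_smul, hU, hQ']; abel
    have hmat2 : Λ₀ + Λ * ((n : ℝ) • S) = (n : ℝ) • U + Λ₀ := by
      rw [Matrix.mul_smul, hU]; abel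
    have hvec1 : Λ *ᵥ ((n : ℝ) • t + δω) + Λ₀ *ᵥ β₀ = (n : ℝ) • v + f' := by
      rw [Matrix.mulVec_add, Matrix.mulVec_smul, hv, hf']; abel
    have hvec2 : Λ *ᵥ ((n : ℝ) • t) + Λ₀ *ᵥ β₀ = (n : ℝ) • v + Λ₀ *ᵥ β₀ := by
      rw [Matrix.mulVec_smul, hv]
    have hDP := hKB n hn Q' f' hQ'norm hf'norm
    have hNP := hKB n hn Λ₀ (Λ₀ *ᵥ β₀) hQnorm hfnorm
    rw [Set.mem_setOf_eq] at hω
    rw [← hΔω, ← hδω] at hω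
    rw [hmat1, hmat2, hvec1, hvec2] at hω
    set w₁ : Fin d → ℝ := ((n : ℝ) • U + Q')⁻¹ *ᵥ ((n : ℝ) • v + f') with hw₁
    set w₂ : Fin d → ℝ := ((n : ℝ) • U + Λ₀)⁻¹ *ᵥ ((n : ℝ) • v + Λ₀ *ᵥ β₀) with hw₂
    have htri : ‖w₁ - w₂‖ ≤ 2 * C₀ / n := by
      have : w₁ - w₂ = (w₁ - U⁻¹ *ᵥ v) - (w₂ - U⁻¹ *ᵥ v) := by abel
      rw [this]
      calc ‖(w₁ - U⁻¹ *ᵥ v) - (w₂ - U⁻¹ *ᵥ v)‖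
          ≤ ‖w₁ - U⁻¹ *ᵥ v‖ + ‖w₂ - U⁻¹ *ᵥ v‖ := norm_sub_le _ _
        _ ≤ C₀ / n + C₀ / n := add_le_add hDP hNP
        _ = 2 * C₀ / n := by ring
    have hl1 : l1 (w₁ - w₂) ≤ 2 * d * (2 * C₀) / n := by
      calc l1 (w₁ - w₂) ≤ d * ‖w₁ - w₂‖ := l1_le_card_norm _
        _ ≤ d * (2 * C₀ / n) := mul_le_mul_of_nonneg_left htri (by positivity)
        _ ≤ 2 * d * (2 * C₀) / n := by
            rw [div_eq_mul_inv, div_eq_mul_inv]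
            have h1 : (0:ℝ) ≤ C₀ * (↑n)⁻¹ * d := by positivity
            nlinarith [h1]
    exact absurd hω (not_lt.mpr hl1)
  calc P _ ≤ P bad := measure_mono hsubset
    _ < ENNReal.ofReal α := hPbad

end MatInst
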